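/- arXiv:1903.11841 — 2 statements merged into one kernel-verified Lean document; each statement's English description precedes it below -/
import Mathlib

section
/- Let (a,b,c,d,e,f) ∈ ℝ⁶ and let Ric(a,b,c,d,e,f) be the symmetric 2×2 matrix with entries Ric₁₁ = (a−d)d + b(f−c), Ric₁₂ = Ric₂₁ = cd − be, Ric₂₂ = c(f−c) + (a−d)e. Assume Ric(a,b,c,d,e,f) ≠ 0. Then Ric₁₁ = 0 and Ric₁₂ = 0 (i.e., Ric is a multiple of dx²⊗dx²) if and only if b = 0 and d = 0. -/
/-- The Ricci tensor of the Type A model with Christoffel symbols `(a,b,c,d,e,f)`. -/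
def Ric (a b c d e f : ℝ) : Matrix (Fin 2) (Fin 2) ℝ :=
  !![(a-d)*d + b*(f-c), c*d - b*e; c*d - b*e, c*(f-c) + (a-d)*e]

theorem stmt_3 (a b c d e f : ℝ) (h : Ric a b c d e f ≠ 0) :
    (Ric a b c d e f 0 0 = 0 ∧ Ric a b c d e f 0 1 = 0) ↔ (b = 0 ∧ d = 0) := by
  have e00 : Ric a b c d e f 0 0 = (a-d)*d + b*(f-c) := by simp [Ric]
  have e01 : Ric a b c d e f 0 1 = c*d - b*e := by simp [Ric]
  rw [e00, e01]
  constructor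
  · rintro ⟨h1, h2⟩
    have hK : c*(f-c) + (a-d)*e ≠ 0 := by
      intro hK0
      apply h
      ext i j
      fin_cases i <;> fin_cases j <;> simp [Ric] <;> linarith
    have hb : b = 0 := by
      have : b * (c*(f-c) + (a-d)*e) = 0 := by linear_combination c*h1 - (a-d)*h2
      exact (mul_eq_zero.mp this).resolve_right hK
    have hd : d = 0 := by
      subst hb
      have : d * (c*(f-c) + (a-d)*e) = 0 := by linear_combination e*h1 + (f-c)*h2
      exact (mul_eq_zero.mp this).resolve_right hK
    exact ⟨hb, hd⟩
  · rintro ⟨hb, hd⟩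
    subst hb; subst hd
    constructor <;> ring
end

section
/- The map V₂ : ℝ³ → ℝ⁶ defined by V₂(u,v,w) = (1 − 2uw + vw², w(1 − uw + vw²), u − vw, −vw², v, u + vw) is injective. -/
/-- The space of Type B models: `(a,b,c,d,e,f)` records the Christoffel symbols
`Γᵢⱼᵏ = Aᵢⱼᵏ / x¹`. -/
abbrev R6 : Type := ℝ × ℝ × ℝ × ℝ × ℝ × ℝ

def V2 : ℝ × ℝ × ℝ → R6 := fun p =>
  (1 - 2*p.1*p.2.2 + p.2.1*p.2.2^2,
   p.2.2*(1 - p.1*p.2.2 + p.2.1*p.2.2^2),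
   p.1 - p.2.1*p.2.2, -p.2.1*p.2.2^2, p.2.1, p.1 + p.2.1*p.2.2)

theorem stmt_18 : Function.Injective V2 := by
  rintro ⟨u, v, w⟩ ⟨u', v', w'⟩ h
  simp only [V2, Prod.mk.injEq] at h
  obtain ⟨h1, h2, h3, h4, h5, h6⟩ := h
  subst h5
  have hu : u = u' := by linarith
  subst hu
  have hw : w = w' := by
    by_cases hv : v = 0
    · subst hv
      simp only [zero_mul, mul_zero, add_zero, sub_zero, neg_zero] at h1 h2
      by_cases hu0 : u = 0
      · subst hu0
        nlinarith [h2]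
      · have : u * w = u * w' := by nlinarith [h1]
        exact mul_left_cancel₀ hu0 this
    · have : v * w = v * w' := by linarith
      exact mul_left_cancel₀ hv this
  subst hw
  rfl
end
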